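/- For all natural numbers n and k with 0 ≤ k < ⌊n/2⌋ and every function e : ℕ → ℝ satisfying 0 ≤ e(ℓ) ≤ 1 for all ℓ, the average success probability of the test e at distinguishing Hamming weight k from k+1 satisfies (1/2)·(∑_{ℓ=0}^{k+1} p_k(ℓ)·(1 − e(ℓ)) + ∑_{ℓ=0}^{k+1} p_{k+1}(ℓ)·e(ℓ)) ≤ 1 − (k+1)/(2(n − k)). In particular the worst-case success probability of any procedure distinguishing weight k from weight k+1 based on a weak Schur sampling outcome is at most 1 − (k+1)/(2(n − k)). -/
import Mathlib

/-- The outcome distribution of weak Schur sampling on an `n`-qubit basis state of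
Hamming weight `k`: `p_k(ℓ) = (C(n,ℓ) − C(n,ℓ−1))/C(n,k)` for `ℓ ≤ k` (with
`C(n,ℓ−1)` taken to be `0` when `ℓ = 0`), and `p_k(ℓ) = 0` for `ℓ > k`. -/
noncomputable def schurProb (n k ℓ : ℕ) : ℝ :=
  if ℓ ≤ k then
    ((n.choose ℓ : ℝ) - (if ℓ = 0 then 0 else (n.choose (ℓ - 1) : ℝ))) / (n.choose k : ℝ)
  else 0

lemma schur_num_nonneg (n : ℕ) {ℓ : ℕ} (hl : ℓ ≤ n / 2) :
    (0 : ℝ) ≤ (n.choose ℓ : ℝ) - (if ℓ = 0 then 0 else (n.choose (ℓ - 1) : ℝ)) := by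
  rcases Nat.eq_zero_or_pos ℓ with h | h
  · simp [h]
  · have h1 : ℓ - 1 < n / 2 := by omega
    have := Nat.choose_le_succ_of_lt_half_left h1
    have h2 : ℓ - 1 + 1 = ℓ := by omega
    rw [h2] at this
    simp only [if_neg (by omega : ℓ ≠ 0)]
    have := (Nat.cast_le (α := ℝ)).2 this
    linarith

lemma schur_sum (n k : ℕ) (hk : 0 < n.choose k) :
    ∑ ℓ ∈ Finset.range (k + 2), schurProb n k ℓ = 1 := by
  have hz : schurProb n k (k + 1) = 0 := by simp [schurProb]
  rw [Finset.sum_range_succ, hz, add_zero]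
  have : ∀ ℓ ∈ Finset.range (k + 1), schurProb n k ℓ =
      ((fun m : ℕ => if m = 0 then (0:ℝ) else (n.choose (m-1) : ℝ)) (ℓ+1)
        - (fun m : ℕ => if m = 0 then (0:ℝ) else (n.choose (m-1) : ℝ)) ℓ) / (n.choose k : ℝ) := by
    intro ℓ hℓ
    simp only [Finset.mem_range] at hℓ
    simp [schurProb, Nat.lt_succ_iff.mp hℓ]
  rw [Finset.sum_congr rfl this, ← Finset.sum_div,
    Finset.sum_range_sub (fun m : ℕ => if m = 0 then (0:ℝ) else (n.choose (m-1) : ℝ)) (k+1)]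
  have hck : (0:ℝ) < (n.choose k : ℝ) := by exact_mod_cast hk
  simp [div_self hck.ne']

/-- For `0 ≤ k < ⌊n/2⌋` and any randomized test `e : ℕ → ℝ` with `0 ≤ e(ℓ) ≤ 1`
(`e(ℓ)` being the probability of declaring 'weight `k+1`' upon outcome `ℓ`), the
average success probability at distinguishing weight `k` from weight `k+1` satisfies
`(1/2)(∑_{ℓ=0}^{k+1} p_k(ℓ)(1 − e(ℓ)) + ∑_{ℓ=0}^{k+1} p_{k+1}(ℓ) e(ℓ))
  ≤ 1 − (k+1)/(2(n−k))`. -/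
theorem distinguishing_bound (n k : ℕ) (hk : k < n / 2) (e : ℕ → ℝ)
    (he : ∀ ℓ, 0 ≤ e ℓ ∧ e ℓ ≤ 1) :
    (1 / 2 : ℝ) * (∑ ℓ ∈ Finset.range (k + 2), schurProb n k ℓ * (1 - e ℓ)
        + ∑ ℓ ∈ Finset.range (k + 2), schurProb n (k + 1) ℓ * e ℓ)
      ≤ 1 - ((k : ℝ) + 1) / (2 * ((n : ℝ) - k)) := by
  have hk1 : k + 1 ≤ n / 2 := hk
  have hkn : k + 1 ≤ n := le_trans hk1 (Nat.div_le_self n 2)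
  have hck : 0 < n.choose k := Nat.choose_pos (by omega)
  have hck1 : 0 < n.choose (k + 1) := Nat.choose_pos hkn
  have hle : n.choose k ≤ n.choose (k + 1) := Nat.choose_le_succ_of_lt_half_left hk
  have hckR : (0:ℝ) < (n.choose k : ℝ) := by exact_mod_cast hck
  have hck1R : (0:ℝ) < (n.choose (k+1) : ℝ) := by exact_mod_cast hck1
  have hleR : (n.choose k : ℝ) ≤ (n.choose (k+1) : ℝ) := by exact_mod_cast hle
  -- combine the two sums
  rw [← Finset.sum_add_distrib]
  have key : ∀ ℓ ∈ Finset.range (k + 2),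
      schurProb n k ℓ * (1 - e ℓ) + schurProb n (k+1) ℓ * e ℓ
        ≤ schurProb n k ℓ + (if ℓ = k + 1 then schurProb n (k+1) (k+1) else 0) := by
    intro ℓ hℓ
    simp only [Finset.mem_range] at hℓ
    obtain ⟨he0, he1⟩ := he ℓ
    rcases eq_or_lt_of_le (Nat.lt_succ_iff.mp hℓ) with h | h
    · -- ℓ = k + 1
      subst h
      have hz : schurProb n k (k+1) = 0 := by simp [schurProb]
      have hnn : (0:ℝ) ≤ schurProb n (k+1) (k+1) := by
        simp only [schurProb, if_pos (le_refl (k+1))]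
        exact div_nonneg (schur_num_nonneg n hk1) hck1R.le
      rw [hz, if_pos rfl]
      nlinarith
    · -- ℓ ≤ k
      have hlk : ℓ ≤ k := Nat.lt_succ_iff.mp h
      rw [if_neg (by omega)]
      have hnum : (0:ℝ) ≤ (n.choose ℓ : ℝ) - (if ℓ = 0 then 0 else (n.choose (ℓ - 1) : ℝ)) :=
        schur_num_nonneg n (by omega)
      have hmono : schurProb n (k+1) ℓ ≤ schurProb n k ℓ := by
        simp only [schurProb, if_pos hlk, if_pos (by omega : ℓ ≤ k + 1)]
        exact div_le_div_of_nonneg_left hnum hckR hleR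
      nlinarith [hnum]
  calc (1/2:ℝ) * ∑ ℓ ∈ Finset.range (k+2),
        (schurProb n k ℓ * (1 - e ℓ) + schurProb n (k+1) ℓ * e ℓ)
      ≤ (1/2:ℝ) * ∑ ℓ ∈ Finset.range (k+2),
        (schurProb n k ℓ + (if ℓ = k + 1 then schurProb n (k+1) (k+1) else 0)) := by
        apply mul_le_mul_of_nonneg_left (Finset.sum_le_sum key) (by norm_num)
    _ = (1/2:ℝ) * (1 + schurProb n (k+1) (k+1)) := by
        rw [Finset.sum_add_distrib, schur_sum n k hck,
          Finset.sum_ite_eq' (Finset.range (k+2)) (k+1)]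
        simp
    _ ≤ 1 - ((k : ℝ) + 1) / (2 * ((n : ℝ) - k)) := by
        have hval : schurProb n (k+1) (k+1) = 1 - ((k:ℝ)+1) / ((n:ℝ) - k) := by
          have hid : (n.choose (k+1) : ℝ) * ((k:ℝ)+1) = (n.choose k : ℝ) * ((n:ℝ) - k) := by
            have := Nat.choose_succ_right_eq n k
            have h2 : ((n.choose (k+1) * (k+1) : ℕ) : ℝ) = ((n.choose k * (n - k) : ℕ) : ℝ) := by
              exact_mod_cast congrArg (Nat.cast (R := ℝ)) this
            push_cast [Nat.cast_sub (by omega : k ≤ n)] at h2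
            convert h2 using 2 <;> push_cast <;> ring
          simp only [schurProb, if_pos (le_refl (k+1)), if_neg (by omega : k + 1 ≠ 0),
            Nat.add_sub_cancel]
          have hnk : (0:ℝ) < (n:ℝ) - k := by
            have : (k:ℝ) < n := by exact_mod_cast (by omega : k < n)
            linarith
          field_simp
          nlinarith [hid]
        rw [hval]
        have hnk : (0:ℝ) < (n:ℝ) - k := by
          have : (k:ℝ) < n := by exact_mod_cast (by omega : k < n)
          linarith
        field_simp
        ring_nf
        nlinarith [hnk]
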